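/- Let (a,b) be a perplex parameter and suppose Δ < 0, where Δ := (a₁b₃ − a₃b₁)² − 4(a₁b₂ − a₂b₁)(a₂b₃ − a₃b₂). Then ℙ_{a,b} is isomorphic to the complex numbers: there exists a real-linear equivalence φ : ℝ² → ℂ such that φ(x * y) = φ(x)·φ(y) for all x, y ∈ ℝ². -/

import Mathlib

open Filter Topology

noncomputable section

/-- The perplex product on `ℝ²` determined by the parameters `a = (a₁,a₂,a₃)`,
`b = (b₁,b₂,b₃)`. -/
def pmul (a₁ a₂ a₃ b₁ b₂ b₃ : ℝ) (x y : ℝ × ℝ) : ℝ × ℝ :=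
  (a₁ * x.1 * y.1 + a₂ * (x.1 * y.2 + x.2 * y.1) + a₃ * x.2 * y.2,
   b₁ * x.1 * y.1 + b₂ * (x.1 * y.2 + x.2 * y.1) + b₃ * x.2 * y.2)

/-- `(a,b)` is a perplex parameter: conditions (i)-(iv). -/
def IsPerplexParam (a₁ a₂ a₃ b₁ b₂ b₃ : ℝ) : Prop :=
  a₁ * a₃ - a₂ ^ 2 ≠ 0 ∧ a₁ * b₂ - a₂ * b₁ ≠ 0 ∧
    a₂ * b₂ - a₃ * b₁ = 0 ∧ a₁ * a₃ - a₂ ^ 2 + a₂ * b₃ - a₃ * b₂ = 0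

/-- Classification, case `Δ < 0`: `ℙ_{a,b}` is isomorphic to `ℂ`. -/
theorem perplex_iso_complex_of_discriminant_neg (a₁ a₂ a₃ b₁ b₂ b₃ : ℝ)
    (hp : IsPerplexParam a₁ a₂ a₃ b₁ b₂ b₃)
    (hΔ : (a₁ * b₃ - a₃ * b₁) ^ 2 -
        4 * (a₁ * b₂ - a₂ * b₁) * (a₂ * b₃ - a₃ * b₂) < 0) :
    ∃ φ : (ℝ × ℝ) ≃ₗ[ℝ] ℂ, ∀ x y : ℝ × ℝ, φ (pmul a₁ a₂ a₃ b₁ b₂ b₃ x y) = φ x * φ y := by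
  obtain ⟨hi, hii, hiii, hiv⟩ := hp
  -- the auxiliary identity K = 0
  have hK : a₁*b₂ - a₂*b₁ + b₁*b₃ - b₂^2 = 0 := by
    rcases eq_or_ne a₂ 0 with h | h
    · subst h
      have ha3 : a₃ ≠ 0 := by
        intro h0; apply hi; rw [h0]; ring
      have hb1 : b₁ = 0 := by
        have h3 : a₃ * b₁ = 0 := by linarith [hiii]
        exact (mul_eq_zero.mp h3).resolve_left ha3
      have hb2 : b₂ = a₁ := by
        have h4 : a₃ * (a₁ - b₂) = 0 := by linear_combination hiv
        have := (mul_eq_zero.mp h4).resolve_left ha3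
        linarith
      rw [hb1, hb2]; ring
    · have h2 : a₂ * (a₁*b₂ - a₂*b₁ + b₁*b₃ - b₂^2) = 0 := by
        linear_combination (a₁ - b₂)*hiii + b₁*hiv
      exact (mul_eq_zero.mp h2).resolve_left h
  have hneg : 0 < -((a₁ * b₃ - a₃ * b₁) ^ 2 -
        4 * (a₁ * b₂ - a₂ * b₁) * (a₂ * b₃ - a₃ * b₂)) := by linarith
  set s : ℝ := Real.sqrt (-((a₁ * b₃ - a₃ * b₁) ^ 2 -
        4 * (a₁ * b₂ - a₂ * b₁) * (a₂ * b₃ - a₃ * b₂))) with hs_def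
  have hs : s^2 = -((a₁ * b₃ - a₃ * b₁) ^ 2 -
        4 * (a₁ * b₂ - a₂ * b₁) * (a₂ * b₃ - a₃ * b₂)) := Real.sq_sqrt hneg.le
  have hspos : 0 < s := Real.sqrt_pos.mpr hneg
  have hA : a₁ * b₂ - a₂ * b₁ ≠ 0 := hii
  set tr : ℝ := (a₁*b₃ - a₃*b₁)/(2*(a₁ * b₂ - a₂ * b₁)) with htr_def
  set ti : ℝ := s/(2*(a₁ * b₂ - a₂ * b₁)) with hti_def
  have htr : 2*(a₁ * b₂ - a₂ * b₁)*tr = a₁*b₃ - a₃*b₁ := by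
    rw [htr_def]; field_simp
  have hti : 2*(a₁ * b₂ - a₂ * b₁)*ti = s := by
    rw [hti_def]; field_simp
  have hti0 : ti ≠ 0 := by
    rw [hti_def]
    exact div_ne_zero hspos.ne' (by simpa using hA)
  set t : ℂ := (tr:ℂ) + (ti:ℂ)*Complex.I with ht_def
  have htre : t.re = tr := by simp [ht_def]
  have htim : t.im = ti := by simp [ht_def]
  -- complex casts of the real identities
  have h2At : 2*((a₁:ℂ)*b₂ - a₂*b₁)*t = ((a₁:ℂ)*b₃ - a₃*b₁) + (s:ℂ)*Complex.I := by
    rw [ht_def]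
    have := congrArg (Complex.ofReal) htr
    have h2 := congrArg (Complex.ofReal) hti
    push_cast at this h2
    linear_combination this + Complex.I * h2
  have hI : (Complex.I)^2 = -1 := Complex.I_sq
  have hsC : ((s:ℂ))^2 = 4*((a₁:ℂ)*b₂ - a₂*b₁)*((a₂:ℂ)*b₃ - a₃*b₂) - ((a₁:ℂ)*b₃ - a₃*b₁)^2 := by
    have := congrArg (Complex.ofReal) hs
    push_cast at this
    linear_combination this
  have hAC : ((a₁:ℂ)*b₂ - a₂*b₁) ≠ 0 := by
    intro h0
    apply hA
    have : (((a₁*b₂ - a₂*b₁ : ℝ)):ℂ) = 0 := by push_cast; exact h0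
    exact_mod_cast this
  have hG : ((a₁:ℂ)*b₂ - a₂*b₁) * t^2
      = ((a₁:ℂ)*b₃ - a₃*b₁) * t - ((a₂:ℂ)*b₃ - a₃*b₂) := by
    have h4A : (4*((a₁:ℂ)*b₂ - a₂*b₁)^2) ≠ 0 :=
      mul_ne_zero (by norm_num) (pow_ne_zero 2 hAC)
    apply mul_left_cancel₀ h4A
    linear_combination (((a₁:ℂ)*b₂ - a₂*b₁)*(2*((a₁:ℂ)*b₂ - a₂*b₁)*t + ((a₁:ℂ)*b₃ - a₃*b₁) + (s:ℂ)*Complex.I)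
        - 2*((a₁:ℂ)*b₂ - a₂*b₁)*((a₁:ℂ)*b₃ - a₃*b₁)) * h2At
      + (((a₁:ℂ)*b₂ - a₂*b₁)*(s:ℂ)^2) * hI
      + (-((a₁:ℂ)*b₂ - a₂*b₁)) * hsC
  set α : ℂ := (a₁:ℂ) + (b₁:ℂ)*t with hα_def
  set β : ℂ := (a₂:ℂ) + (b₂:ℂ)*t with hβ_def
  have h3C : (a₂:ℂ)*b₂ - a₃*b₁ = 0 := by
    have := congrArg (Complex.ofReal) hiii
    push_cast at this; linear_combination this
  have h4C : (a₁:ℂ)*a₃ - a₂^2 + a₂*b₃ - a₃*b₂ = 0 := by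
    have := congrArg (Complex.ofReal) hiv
    push_cast at this; linear_combination this
  have hKC : (a₁:ℂ)*b₂ - a₂*b₁ + b₁*b₃ - b₂^2 = 0 := by
    have := congrArg (Complex.ofReal) hK
    push_cast at this; linear_combination this
  have h1 : α^2 = (a₁:ℂ)*α + (b₁:ℂ)*β := by
    apply mul_left_cancel₀ hAC
    rw [hα_def, hβ_def]
    linear_combination ((b₁:ℂ)^2) * hG + ((b₁:ℂ)^2*t - (a₁:ℂ)*b₁) * h3C
      + (-(b₁:ℂ)^2) * h4C + ((a₁:ℂ)*b₁*t) * hKC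
  have h2 : α*β = (a₂:ℂ)*α + (b₂:ℂ)*β := by
    apply mul_left_cancel₀ hAC
    rw [hα_def, hβ_def]
    linear_combination ((b₁:ℂ)*b₂) * hG + ((b₁:ℂ)*b₂*t - (a₁:ℂ)*b₂) * h3C
      + (-(b₁:ℂ)*b₂) * h4C + ((a₁:ℂ)*b₂*t) * hKC
  have h3 : β^2 = (a₃:ℂ)*α + (b₃:ℂ)*β := by
    apply mul_left_cancel₀ hAC
    rw [hα_def, hβ_def]
    linear_combination ((b₂:ℂ)^2) * hG
      + (2*(a₁:ℂ)*b₂*t - (a₂:ℂ)*b₁*t - (a₂:ℂ)*b₂) * h3C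
      + ((b₁:ℂ)*b₂*t - (a₁:ℂ)*b₂ + (a₂:ℂ)*b₁ - (b₂:ℂ)^2) * h4C
  -- real and imaginary parts
  have hαre : α.re = a₁ + b₁*tr := by simp [hα_def, ht_def]
  have hαim : α.im = b₁*ti := by simp [hα_def, ht_def]
  have hβre : β.re = a₂ + b₂*tr := by simp [hβ_def, ht_def]
  have hβim : β.im = b₂*ti := by simp [hβ_def, ht_def]
  set d : ℝ := ti*(a₁*b₂ - a₂*b₁) with hd_def
  have hd : d ≠ 0 := mul_ne_zero hti0 hA
  -- the linear maps
  set f : (ℝ × ℝ) →ₗ[ℝ] ℂ :=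
    { toFun := fun x => (x.1:ℂ)*α + (x.2:ℂ)*β
      map_add' := by
        intro x y
        simp only [Prod.fst_add, Prod.snd_add, Complex.ofReal_add]; ring
      map_smul' := by
        intro c x
        simp only [Prod.smul_fst, Prod.smul_snd, smul_eq_mul, RingHom.id_apply,
          Complex.real_smul, Complex.ofReal_mul]
        ring } with hf_def
  set g : ℂ →ₗ[ℝ] (ℝ × ℝ) :=
    { toFun := fun z => ((β.im*z.re - β.re*z.im)/d, (α.re*z.im - α.im*z.re)/d)
      map_add' := by
        intro z w
        simp only [Complex.add_re, Complex.add_im, Prod.mk_add_mk, Prod.mk.injEq]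
        constructor <;> ring
      map_smul' := by
        intro c z
        simp only [Complex.real_smul, Complex.mul_re, Complex.mul_im,
          Complex.ofReal_re, Complex.ofReal_im, RingHom.id_apply, Prod.smul_mk,
          smul_eq_mul, Prod.mk.injEq]
        constructor <;> ring } with hg_def
  have hfg : f.comp g = LinearMap.id := by
    apply LinearMap.ext
    intro z
    simp only [LinearMap.comp_apply, LinearMap.id_apply, hf_def, hg_def,
      LinearMap.coe_mk, AddHom.coe_mk]
    apply Complex.ext <;>
      simp only [Complex.add_re, Complex.add_im, Complex.mul_re, Complex.mul_im,
        Complex.ofReal_re, Complex.ofReal_im, hαre, hαim, hβre, hβim, hd_def] <;>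
      field_simp [hA, show b₂ * a₁ - a₂ * b₁ ≠ 0 by rw [mul_comm b₂ a₁]; exact hA] <;> ring
  have hgf : g.comp f = LinearMap.id := by
    apply LinearMap.ext
    intro x
    simp only [LinearMap.comp_apply, LinearMap.id_apply, hf_def, hg_def,
      LinearMap.coe_mk, AddHom.coe_mk]
    have hre : ((x.1:ℂ)*α + (x.2:ℂ)*β).re = x.1*α.re + x.2*β.re := by
      simp [Complex.add_re, Complex.mul_re]
    have him : ((x.1:ℂ)*α + (x.2:ℂ)*β).im = x.1*α.im + x.2*β.im := by
      simp [Complex.add_im, Complex.mul_im]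
    rw [hre, him]
    apply Prod.ext <;>
      simp only [hαre, hαim, hβre, hβim, hd_def] <;> field_simp [hA, show a₁ * b₂ - b₁ * a₂ ≠ 0 by rw [mul_comm b₁ a₂]; exact hA,
          show b₂ * a₁ - b₁ * a₂ ≠ 0 by rw [mul_comm b₂ a₁, mul_comm b₁ a₂]; exact hA] <;> ring
  refine ⟨LinearEquiv.ofLinear f g hfg hgf, fun x y => ?_⟩
  show f (pmul a₁ a₂ a₃ b₁ b₂ b₃ x y) = f x * f y
  simp only [hf_def, LinearMap.coe_mk, AddHom.coe_mk, pmul]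
  push_cast
  linear_combination (-(x.1:ℂ)*y.1) * h1 + (-((x.1:ℂ)*y.2 + (x.2:ℂ)*y.1)) * h2
    + (-(x.2:ℂ)*y.2) * h3
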